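/- Let P > 0 and let k : [0,P] → ℝ be Lebesgue-integrable. Then (∫₀^P k(x) dx)² + P² ≤ (∫₀^P √(k(x)² + 1) dx)². -/

import Mathlib

open MeasureTheory Real Set

theorem sq_integral_add_sq_le_sq_integral_sqrt (P : ℝ) (hP : 0 < P) (k : ℝ → ℝ)
    (hk : IntegrableOn k (Icc (0 : ℝ) P) volume) :
    (∫ x in (0 : ℝ)..P, k x) ^ 2 + P ^ 2 ≤
      (∫ x in (0 : ℝ)..P, Real.sqrt (k x ^ 2 + 1)) ^ 2 := by
  have hP' : (0:ℝ) ≤ P := hP.le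
  set μ := volume.restrict (Set.Ioc (0:ℝ) P) with hμ
  have hk' : Integrable k μ := hk.mono_set Ioc_subset_Icc_self
  set F : ℝ → EuclideanSpace ℝ (Fin 2) :=
    fun x => k x • EuclideanSpace.single 0 (1:ℝ) + EuclideanSpace.single 1 (1:ℝ) with hFdef
  have hFapply : ∀ x, (F x 0 = k x) ∧ (F x 1 = 1) := by
    intro x
    constructor <;> simp [hFdef, EuclideanSpace.single_apply]
  have hFnorm : ∀ x, ‖F x‖ = Real.sqrt (k x ^ 2 + 1) := by
    intro x
    rw [EuclideanSpace.norm_eq]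
    congr 1
    rw [Fin.sum_univ_two, (hFapply x).1, (hFapply x).2]
    simp [sq_abs]
  -- measurability
  have hmeas : AEStronglyMeasurable F μ :=
    (hk'.1.smul_const _).add aestronglyMeasurable_const
  have hFint : Integrable F μ := by
    refine Integrable.mono' (hk'.abs.add (integrable_const 1)) hmeas ?_
    filter_upwards with x
    rw [hFnorm x]
    have h1 : k x ^ 2 + 1 ≤ (|k x| + 1) ^ 2 := by nlinarith [abs_nonneg (k x), sq_abs (k x)]
    calc Real.sqrt (k x ^ 2 + 1) ≤ Real.sqrt ((|k x| + 1)^2) := Real.sqrt_le_sqrt h1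
      _ = |k x| + 1 := Real.sqrt_sq (by positivity)
  -- components of the integral
  have hproj : ∀ i : Fin 2, (∫ x, F x ∂μ) i = ∫ x, F x i ∂μ := by
    intro i
    have := (EuclideanSpace.proj i : EuclideanSpace ℝ (Fin 2) →L[ℝ] ℝ).integral_comp_comm hFint
    simpa using this.symm
  have hμP : μ Set.univ = ENNReal.ofReal P := by
    simp [hμ, Real.volume_Ioc, hP']
  have h1int : (∫ x, (1:ℝ) ∂μ) = P := by
    simp [integral_const, measureReal_def, hμP, ENNReal.toReal_ofReal hP']
  have h0 : (∫ x, F x ∂μ) 0 = ∫ x, k x ∂μ := by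
    rw [hproj 0]
    congr 1; ext x; exact (hFapply x).1
  have h1 : (∫ x, F x ∂μ) 1 = P := by
    rw [hproj 1]
    rw [← h1int]; congr 1; ext x; exact (hFapply x).2
  have hnormInt : ‖∫ x, F x ∂μ‖ = Real.sqrt ((∫ x, k x ∂μ)^2 + P^2) := by
    rw [EuclideanSpace.norm_eq]
    congr 1
    rw [Fin.sum_univ_two, h0, h1]
    simp [sq_abs]
  have key : Real.sqrt ((∫ x, k x ∂μ)^2 + P^2) ≤ ∫ x, Real.sqrt (k x ^ 2 + 1) ∂μ := by
    rw [← hnormInt]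
    calc ‖∫ x, F x ∂μ‖ ≤ ∫ x, ‖F x‖ ∂μ := norm_integral_le_integral_norm F
      _ = ∫ x, Real.sqrt (k x ^ 2 + 1) ∂μ := by
        congr 1; ext x; exact hFnorm x
  rw [intervalIntegral.integral_of_le hP', intervalIntegral.integral_of_le hP']
  have hS : 0 ≤ ∫ x, Real.sqrt (k x ^ 2 + 1) ∂μ :=
    integral_nonneg fun x => Real.sqrt_nonneg _
  have := pow_le_pow_left₀ (Real.sqrt_nonneg _) key 2
  rwa [Real.sq_sqrt (by positivity)] at this
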